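/- Let A be an m×n real matrix whose columns have ℓ2-norm 1, let s₁, s₂ ≤ n be positive integers and α ≥ 0. Suppose x, y ∈ ℝ^n have disjoint supports, x is s₁-sparse, ‖y‖₁ ≤ α·s₂ and ‖y‖_∞ ≤ α. Then |⟨Ax, Ay⟩| ≤ α·√s₂·μ₁(A, s₁+s₂−1)·‖x‖₂. -/
import Mathlib


open scoped Classical

/-- Cumulative coherence function μ₁(A, s). -/
noncomputable def mu1 {m n : ℕ} (A : Matrix (Fin m) (Fin n) ℝ) (s : ℕ) : ℝ :=
  sSup {t : ℝ | ∃ S : Finset (Fin n), S.card ≤ s ∧ ∃ i : Fin n, i ∉ S ∧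
    t = ∑ j ∈ S, |∑ k : Fin m, A k i * A k j|}

lemma mu1_set_bddAbove {m n : ℕ} (A : Matrix (Fin m) (Fin n) ℝ) (s : ℕ) :
    BddAbove {t : ℝ | ∃ S : Finset (Fin n), S.card ≤ s ∧ ∃ i : Fin n, i ∉ S ∧
      t = ∑ j ∈ S, |∑ k : Fin m, A k i * A k j|} := by
  refine ⟨∑ i : Fin n, ∑ j : Fin n, |∑ k : Fin m, A k i * A k j|, ?_⟩
  rintro t ⟨S, hS, i, hi, rfl⟩
  calc ∑ j ∈ S, |∑ k, A k i * A k j| ≤ ∑ j : Fin n, |∑ k, A k i * A k j| :=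
        Finset.sum_le_sum_of_subset_of_nonneg (Finset.subset_univ S)
          (fun _ _ _ => abs_nonneg _)
    _ ≤ _ := Finset.single_le_sum
        (f := fun i => ∑ j : Fin n, |∑ k : Fin m, A k i * A k j|)
        (fun _ _ => Finset.sum_nonneg fun _ _ => abs_nonneg _) (Finset.mem_univ i)

lemma le_mu1 {m n : ℕ} (A : Matrix (Fin m) (Fin n) ℝ) (s : ℕ) (S : Finset (Fin n))
    (i : Fin n) (hi : i ∉ S) (hcard : S.card ≤ s) :
    ∑ j ∈ S, |∑ k : Fin m, A k i * A k j| ≤ mu1 A s :=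
  le_csSup (mu1_set_bddAbove A s) ⟨S, hcard, i, hi, rfl⟩

lemma mu1_nonneg {m n : ℕ} (hn : 0 < n) (A : Matrix (Fin m) (Fin n) ℝ) (s : ℕ) :
    0 ≤ mu1 A s := by
  have := le_mu1 A s ∅ ⟨0, hn⟩ (by simp) (by simp)
  simpa using this

lemma mu1_mono {m n : ℕ} (hn : 0 < n) (A : Matrix (Fin m) (Fin n) ℝ) {s s' : ℕ}
    (h : s ≤ s') : mu1 A s ≤ mu1 A s' := by
  refine csSup_le_csSup (mu1_set_bddAbove A s') ⟨0, ∅, by simp, ⟨0, hn⟩, by simp⟩ ?_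
  rintro t ⟨S, hS, i, hi, rfl⟩
  exact ⟨S, hS.trans h, i, hi, rfl⟩

lemma select {ι : Type*} [DecidableEq ι] (U : Finset ι) (w c : ι → ℝ) (α : ℝ) (s : ℕ)
    (hw0 : ∀ j ∈ U, 0 ≤ w j) (hwα : ∀ j ∈ U, w j ≤ α) (hc : ∀ j, 0 ≤ c j)
    (hsum : ∑ j ∈ U, w j ≤ α * s) :
    ∃ T, T ⊆ U ∧ T.card ≤ s ∧ ∑ j ∈ U, w j * c j ≤ α * ∑ j ∈ T, c j := by
  classical
  by_cases hcard : U.card ≤ s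
  · refine ⟨U, le_refl _, hcard, ?_⟩
    rw [Finset.mul_sum]
    exact Finset.sum_le_sum fun j hj => mul_le_mul_of_nonneg_right (hwα j hj) (hc j)
  · push_neg at hcard
    obtain ⟨T₀, hT₀U, hT₀card⟩ := Finset.exists_subset_card_eq (s := U) (n := s) hcard.le
    have hne : (U.powerset.filter fun T => T.card = s).Nonempty :=
      ⟨T₀, by simp [Finset.mem_powerset, hT₀U, hT₀card]⟩
    obtain ⟨T, hT, hTmax⟩ := Finset.exists_max_image _ (fun T => ∑ j ∈ T, c j) hne
    simp only [Finset.mem_filter, Finset.mem_powerset] at hT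
    obtain ⟨hTU, hTcard⟩ := hT
    by_cases hs0 : s = 0
    · refine ⟨∅, Finset.empty_subset _, by simp, ?_⟩
      have h0 : ∑ j ∈ U, w j = 0 := le_antisymm (by simpa [hs0] using hsum)
        (Finset.sum_nonneg hw0)
      have : ∀ j ∈ U, w j = 0 := (Finset.sum_eq_zero_iff_of_nonneg hw0).mp h0
      rw [Finset.sum_empty, mul_zero]
      exact le_of_eq (Finset.sum_eq_zero fun j hj => by rw [this j hj, zero_mul])
    have hTne : T.Nonempty := Finset.card_pos.mp (by omega)
    have key : ∀ k ∈ U \ T, ∀ j ∈ T, c k ≤ c j := by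
      intro k hk j hj
      by_contra hlt
      push_neg at hlt
      rw [Finset.mem_sdiff] at hk
      have hkT' : k ∉ T.erase j := fun h => hk.2 (Finset.mem_of_mem_erase h)
      have hT'U : insert k (T.erase j) ⊆ U := by
        intro a ha
        rcases Finset.mem_insert.mp ha with h | h
        · exact h ▸ hk.1
        · exact hTU (Finset.mem_of_mem_erase h)
      have hjs : 1 ≤ T.card := Finset.card_pos.mpr ⟨j, hj⟩
      have hT'card : (insert k (T.erase j)).card = s := by
        rw [Finset.card_insert_of_notMem hkT', Finset.card_erase_of_mem hj, hTcard]
        omega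
      have hsum' : ∑ a ∈ T, c a < ∑ a ∈ insert k (T.erase j), c a := by
        rw [Finset.sum_insert hkT', ← Finset.add_sum_erase _ _ hj]
        linarith
      exact absurd (hTmax _ (by simp [Finset.mem_filter, Finset.mem_powerset, hT'U, hT'card]))
        (not_le.mpr hsum')
    obtain ⟨j₀, hj₀, hj₀min⟩ := Finset.exists_min_image T c hTne
    refine ⟨T, hTU, hTcard.le, ?_⟩
    have hsplit : ∑ j ∈ U \ T, w j * c j + ∑ j ∈ T, w j * c j = ∑ j ∈ U, w j * c j :=
      Finset.sum_sdiff hTU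
    have hb1 : ∑ j ∈ U \ T, w j * c j ≤ (∑ j ∈ U \ T, w j) * c j₀ := by
      rw [Finset.sum_mul]
      exact Finset.sum_le_sum fun k hk => mul_le_mul_of_nonneg_left (key k hk j₀ hj₀)
        (hw0 k (Finset.mem_sdiff.mp hk).1)
    have hb2 : (∑ j ∈ U \ T, w j) * c j₀ ≤ (α * s - ∑ j ∈ T, w j) * c j₀ := by
      refine mul_le_mul_of_nonneg_right ?_ (hc j₀)
      have := Finset.sum_sdiff hTU (f := w)
      linarith
    have hb3 : (α * s - ∑ j ∈ T, w j) * c j₀ ≤ ∑ j ∈ T, (α - w j) * c j := by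
      have hαs : α * s - ∑ j ∈ T, w j = ∑ j ∈ T, (α - w j) := by
        rw [Finset.sum_sub_distrib, Finset.sum_const, hTcard, nsmul_eq_mul]
        ring
      rw [hαs, Finset.sum_mul]
      exact Finset.sum_le_sum fun j hj => mul_le_mul_of_nonneg_left (hj₀min j hj)
        (by linarith [hwα j (hTU hj)])
    have hfin : ∑ j ∈ T, w j * c j + ∑ j ∈ T, (α - w j) * c j = α * ∑ j ∈ T, c j := by
      rw [← Finset.sum_add_distrib, Finset.mul_sum]
      exact Finset.sum_congr rfl fun j _ => by ring
    linarith

/-- If `x, y` have disjoint supports, `x` is `s₁`-sparse, `‖y‖₁ ≤ α s₂` and `‖y‖_∞ ≤ α`,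
then `|⟨Ax, Ay⟩| ≤ α √s₂ μ₁(A, s₁+s₂−1) ‖x‖₂`. -/
theorem stmt3 {m n : ℕ} (A : Matrix (Fin m) (Fin n) ℝ)
    (hA : ∀ j, ∑ k, (A k j) ^ 2 = 1)
    (s₁ s₂ : ℕ) (hs₁ : 1 ≤ s₁) (hs₂ : 1 ≤ s₂) (hs₁n : s₁ ≤ n) (hs₂n : s₂ ≤ n)
    (α : ℝ) (hα : 0 ≤ α)
    (x y : Fin n → ℝ)
    (hdisj : ∀ i, x i = 0 ∨ y i = 0)
    (hx : (Finset.univ.filter fun i => x i ≠ 0).card ≤ s₁)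
    (hy1 : ∑ i, |y i| ≤ α * s₂)
    (hyinf : ∀ i, |y i| ≤ α) :
    |∑ k, A.mulVec x k * A.mulVec y k| ≤
      α * Real.sqrt s₂ * mu1 A (s₁ + s₂ - 1) * Real.sqrt (∑ i, (x i) ^ 2) := by
  classical
  have hn : 0 < n := lt_of_lt_of_le hs₁ hs₁n
  set S : Finset (Fin n) := Finset.univ.filter fun i => x i ≠ 0 with hSdef
  set U : Finset (Fin n) := Finset.univ.filter fun j => y j ≠ 0 with hUdef
  set G : Fin n → Fin n → ℝ := fun i j => ∑ k, A k i * A k j with hGdef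
  set d : Fin n → ℝ := fun j => ∑ k, A.mulVec x k * A k j with hddef
  -- Step 1: rewrite the inner product
  have h1 : ∑ k, A.mulVec x k * A.mulVec y k = ∑ j ∈ U, y j * d j := by
    have e1 : ∑ k, A.mulVec x k * A.mulVec y k = ∑ j, y j * d j := by
      calc ∑ k, A.mulVec x k * A.mulVec y k
          = ∑ k, ∑ j, y j * (A.mulVec x k * A k j) := by
            refine Finset.sum_congr rfl fun k _ => ?_
            rw [show A.mulVec y k = ∑ j, A k j * y j from rfl, Finset.mul_sum]
            exact Finset.sum_congr rfl fun j _ => by ring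
        _ = ∑ j, ∑ k, y j * (A.mulVec x k * A k j) := Finset.sum_comm
        _ = ∑ j, y j * d j := by
            refine Finset.sum_congr rfl fun j _ => ?_
            rw [hddef, Finset.mul_sum]
    rw [e1]
    refine (Finset.sum_subset (Finset.subset_univ U) fun j _ hj => ?_).symm
    have : y j = 0 := by simpa [hUdef] using hj
    rw [this, zero_mul]
  -- Step 2: triangle inequality
  have h2 : |∑ j ∈ U, y j * d j| ≤ ∑ j ∈ U, |y j| * |d j| := by
    refine (Finset.abs_sum_le_sum_abs _ _).trans_eq ?_
    exact Finset.sum_congr rfl fun j _ => abs_mul _ _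
  -- Step 3: selection
  have hsumU : ∑ j ∈ U, |y j| ≤ α * s₂ := by
    refine le_trans (Finset.sum_le_sum_of_subset_of_nonneg (Finset.subset_univ U)
      (fun _ _ _ => abs_nonneg _)) hy1
  obtain ⟨T, hTU, hTcard, hsel⟩ := select U (fun j => |y j|) (fun j => |d j|) α s₂
    (fun _ _ => abs_nonneg _) (fun j _ => hyinf j) (fun _ => abs_nonneg _) hsumU
  have hTS : ∀ j ∈ T, j ∉ S := by
    intro j hj
    have hyj : y j ≠ 0 := by simpa [hUdef] using hTU hj
    have hxj : x j = 0 := (hdisj j).resolve_right hyj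
    simp [hSdef, hxj]
  have hST : ∀ i ∈ S, i ∉ T := by
    intro i hi hiT
    exact hTS i hiT hi
  -- Step 4: d j as a sum over S
  have hd : ∀ j, d j = ∑ i ∈ S, x i * G i j := by
    intro j
    have e1 : d j = ∑ i, x i * G i j := by
      calc d j = ∑ k, ∑ i, x i * (A k i * A k j) := by
            refine Finset.sum_congr rfl fun k _ => ?_
            rw [show A.mulVec x k = ∑ i, A k i * x i from rfl, Finset.sum_mul]
            exact Finset.sum_congr rfl fun i _ => by ring
        _ = ∑ i, ∑ k, x i * (A k i * A k j) := Finset.sum_comm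
        _ = ∑ i, x i * G i j := by
            refine Finset.sum_congr rfl fun i _ => ?_
            rw [hGdef, Finset.mul_sum]
    rw [e1]
    refine (Finset.sum_subset (Finset.subset_univ S) fun i _ hi => ?_).symm
    have : x i = 0 := by simpa [hSdef] using hi
    rw [this, zero_mul]
  -- Step 5: pointwise bound on |d j|^2
  have hdj2 : ∀ j, j ∉ S → |d j| ^ 2 ≤ mu1 A s₁ * ∑ i ∈ S, x i ^ 2 * |G i j| := by
    intro j hj
    have habs : |d j| ≤ ∑ i ∈ S, |x i| * |G i j| := by
      rw [hd j]
      refine (Finset.abs_sum_le_sum_abs _ _).trans_eq ?_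
      exact Finset.sum_congr rfl fun i _ => abs_mul _ _
    have hcs : (∑ i ∈ S, |x i| * |G i j|) ^ 2 ≤
        (∑ i ∈ S, |G i j|) * ∑ i ∈ S, x i ^ 2 * |G i j| := by
      have := Finset.sum_mul_sq_le_sq_mul_sq S (fun i => Real.sqrt |G i j|)
        (fun i => |x i| * Real.sqrt |G i j|)
      have e1 : ∀ i, Real.sqrt |G i j| * (|x i| * Real.sqrt |G i j|) = |x i| * |G i j| := by
        intro i
        rw [show Real.sqrt |G i j| * (|x i| * Real.sqrt |G i j|)
            = |x i| * (Real.sqrt |G i j| * Real.sqrt |G i j|) by ring,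
          Real.mul_self_sqrt (abs_nonneg _)]
      have e2 : ∀ i, Real.sqrt |G i j| ^ 2 = |G i j| := fun i =>
        Real.sq_sqrt (abs_nonneg _)
      have e3 : ∀ i, (|x i| * Real.sqrt |G i j|) ^ 2 = x i ^ 2 * |G i j| := by
        intro i
        rw [mul_pow, e2, sq_abs]
      simpa only [e1, e2, e3] using this
    have hmu : ∑ i ∈ S, |G i j| ≤ mu1 A s₁ := by
      refine le_trans (le_of_eq ?_) (le_mu1 A s₁ S j hj hx)
      refine Finset.sum_congr rfl fun i _ => ?_
      rw [hGdef]
      congr 1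
      exact Finset.sum_congr rfl fun k _ => mul_comm _ _
    calc |d j| ^ 2 ≤ (∑ i ∈ S, |x i| * |G i j|) ^ 2 :=
          pow_le_pow_left₀ (abs_nonneg _) habs 2
      _ ≤ (∑ i ∈ S, |G i j|) * ∑ i ∈ S, x i ^ 2 * |G i j| := hcs
      _ ≤ mu1 A s₁ * ∑ i ∈ S, x i ^ 2 * |G i j| :=
          mul_le_mul_of_nonneg_right hmu
            (Finset.sum_nonneg fun i _ => mul_nonneg (sq_nonneg _) (abs_nonneg _))
  -- Step 6: bound the sum over T
  have hsum2 : ∑ j ∈ T, |d j| ^ 2 ≤ mu1 A s₁ * (mu1 A s₂ * ∑ i, x i ^ 2) := by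
    calc ∑ j ∈ T, |d j| ^ 2
        ≤ ∑ j ∈ T, mu1 A s₁ * ∑ i ∈ S, x i ^ 2 * |G i j| :=
          Finset.sum_le_sum fun j hj => hdj2 j (hTS j hj)
      _ = mu1 A s₁ * ∑ i ∈ S, x i ^ 2 * ∑ j ∈ T, |G i j| := by
          rw [← Finset.mul_sum, Finset.sum_comm]
          congr 1
          exact Finset.sum_congr rfl fun i _ => (Finset.mul_sum _ _ _).symm
      _ ≤ mu1 A s₁ * ∑ i ∈ S, x i ^ 2 * mu1 A s₂ := by
          refine mul_le_mul_of_nonneg_left ?_ (mu1_nonneg hn A s₁)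
          refine Finset.sum_le_sum fun i hi => ?_
          exact mul_le_mul_of_nonneg_left (le_mu1 A s₂ T i (hST i hi) hTcard) (sq_nonneg _)
      _ = mu1 A s₁ * (mu1 A s₂ * ∑ i ∈ S, x i ^ 2) := by
          rw [← Finset.sum_mul]; ring
      _ ≤ mu1 A s₁ * (mu1 A s₂ * ∑ i, x i ^ 2) := by
          refine mul_le_mul_of_nonneg_left (mul_le_mul_of_nonneg_left ?_
            (mu1_nonneg hn A s₂)) (mu1_nonneg hn A s₁)
          exact Finset.sum_le_sum_of_subset_of_nonneg (Finset.subset_univ S)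
            (fun _ _ _ => sq_nonneg _)
  have hcsT : (∑ j ∈ T, |d j|) ^ 2 ≤ (T.card : ℝ) * ∑ j ∈ T, |d j| ^ 2 := by
    have := Finset.sum_mul_sq_le_sq_mul_sq T (fun _ => (1 : ℝ)) (fun j => |d j|)
    simpa using this
  have hTsum : ∑ j ∈ T, |d j| ≤
      Real.sqrt s₂ * Real.sqrt (mu1 A s₁ * (mu1 A s₂ * ∑ i, x i ^ 2)) := by
    have hsq : (∑ j ∈ T, |d j|) ^ 2 ≤ (s₂ : ℝ) * (mu1 A s₁ * (mu1 A s₂ * ∑ i, x i ^ 2)) := by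
      refine hcsT.trans ?_
      refine mul_le_mul (by exact_mod_cast hTcard) hsum2
        (Finset.sum_nonneg fun _ _ => sq_nonneg _) (Nat.cast_nonneg _)
    have h0 : (0 : ℝ) ≤ ∑ j ∈ T, |d j| := Finset.sum_nonneg fun _ _ => abs_nonneg _
    calc ∑ j ∈ T, |d j| = Real.sqrt ((∑ j ∈ T, |d j|) ^ 2) := (Real.sqrt_sq h0).symm
      _ ≤ Real.sqrt ((s₂ : ℝ) * (mu1 A s₁ * (mu1 A s₂ * ∑ i, x i ^ 2))) :=
          Real.sqrt_le_sqrt hsq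
      _ = Real.sqrt s₂ * Real.sqrt (mu1 A s₁ * (mu1 A s₂ * ∑ i, x i ^ 2)) :=
          Real.sqrt_mul (Nat.cast_nonneg _) _
  -- monotonicity of mu1
  set M := mu1 A (s₁ + s₂ - 1) with hMdef
  have hM0 : 0 ≤ M := mu1_nonneg hn A _
  have hM1 : mu1 A s₁ ≤ M := mu1_mono hn A (by omega)
  have hM2 : mu1 A s₂ ≤ M := mu1_mono hn A (by omega)
  have hsqrtM : Real.sqrt (mu1 A s₁ * mu1 A s₂) ≤ M := by
    calc Real.sqrt (mu1 A s₁ * mu1 A s₂) ≤ Real.sqrt (M * M) :=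
          Real.sqrt_le_sqrt (mul_le_mul hM1 hM2 (mu1_nonneg hn A s₂) hM0)
      _ = M := Real.sqrt_mul_self hM0
  -- final combination
  calc |∑ k, A.mulVec x k * A.mulVec y k|
      = |∑ j ∈ U, y j * d j| := by rw [h1]
    _ ≤ ∑ j ∈ U, |y j| * |d j| := h2
    _ ≤ α * ∑ j ∈ T, |d j| := hsel
    _ ≤ α * (Real.sqrt s₂ * Real.sqrt (mu1 A s₁ * (mu1 A s₂ * ∑ i, x i ^ 2))) :=
        mul_le_mul_of_nonneg_left hTsum hα
    _ = α * Real.sqrt s₂ * (Real.sqrt (mu1 A s₁ * mu1 A s₂) * Real.sqrt (∑ i, x i ^ 2)) := by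
        rw [show mu1 A s₁ * (mu1 A s₂ * ∑ i, x i ^ 2)
            = (mu1 A s₁ * mu1 A s₂) * ∑ i, x i ^ 2 by ring,
          Real.sqrt_mul (mul_nonneg (mu1_nonneg hn A s₁) (mu1_nonneg hn A s₂))]
        ring
    _ ≤ α * Real.sqrt s₂ * (M * Real.sqrt (∑ i, x i ^ 2)) := by
        refine mul_le_mul_of_nonneg_left ?_ (by positivity)
        exact mul_le_mul_of_nonneg_right hsqrtM (Real.sqrt_nonneg _)
    _ = α * Real.sqrt s₂ * M * Real.sqrt (∑ i, x i ^ 2) := by ring
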